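/- arXiv:math/0610855 — 2 statements merged into one kernel-verified Lean document; each statement's English description precedes it below -/
import Mathlib

section
/- Let u : ℝ^d → ℝ, l ∈ ℝ^d, h > 0. Then pointwise |Δ_{h,l} u| ≤ |δ_{h,−l}((δ_{h,l} u)₋)| + |δ_{h,l}((δ_{h,−l} u)₋)|, where Δ_{h,l} u = −δ_{h,l} δ_{h,−l} u and w₋ denotes the pointwise negative part of w. -/
/-- Discrete first difference operator δ_{h,l} u(x) = (u(x + h·l) − u(x))/h. -/
noncomputable def fdDelta {d : ℕ} (h : ℝ) (l : Fin d → ℝ) (u : (Fin d → ℝ) → ℝ) :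
    (Fin d → ℝ) → ℝ :=
  fun x => (u (x + h • l) - u x) / h

/-- Discrete second difference operator Δ_{h,l} u = −δ_{h,l} δ_{h,−l} u. -/
noncomputable def fdDelta2 {d : ℕ} (h : ℝ) (l : Fin d → ℝ) (u : (Fin d → ℝ) → ℝ) :
    (Fin d → ℝ) → ℝ :=
  fun x => -(fdDelta h l (fdDelta h (-l) u) x)

private lemma aux_abs (a b : ℝ) :
    |a + b| ≤ |max b 0 - max (-a) 0| + |max a 0 - max (-b) 0| := by
  have key : ∀ c : ℝ, max c 0 - max (-c) 0 = c := by
    intro c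
    rcases le_total c 0 with h | h
    · rw [max_eq_right h, max_eq_left (neg_nonneg.mpr h)]; ring
    · rw [max_eq_left h, max_eq_right (neg_nonpos.mpr h)]; ring
  have ha := key a
  have hb := key b
  calc |a + b| = |(max b 0 - max (-a) 0) + (max a 0 - max (-b) 0)| := by
        rw [show (max b 0 - max (-a) 0) + (max a 0 - max (-b) 0)
            = (max a 0 - max (-a) 0) + (max b 0 - max (-b) 0) by ring, ha, hb]
    _ ≤ _ := abs_add_le _ _

theorem abs_second_diff_le_neg_parts {d : ℕ}
    (u : (Fin d → ℝ) → ℝ) (l : Fin d → ℝ) (h : ℝ) (hh : 0 < h)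
    (x : Fin d → ℝ) :
    |fdDelta2 h l u x|
      ≤ |fdDelta h (-l) (fun y => max (-(fdDelta h l u y)) 0) x|
        + |fdDelta h l (fun y => max (-(fdDelta h (-l) u y)) 0) x| := by
  simp only [fdDelta2, fdDelta]
  have e1 : x + h • l + h • (-l) = x := by rw [smul_neg, add_neg_cancel_right]
  have e2 : x + h • (-l) + h • l = x := by rw [smul_neg, neg_add_cancel_right]
  rw [e1, e2]
  set A := u (x + h • l) with hA
  set B := u (x + h • (-l)) with hB
  set C := u x with hC
  have r0 : -(((C - A) / h - (B - C) / h) / h) = ((A - C) / h + (B - C) / h) / h := by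
    ring
  have r1 : -((C - B) / h) = (B - C) / h := by ring
  have r2 : -((C - A) / h) = (A - C) / h := by ring
  rw [r0, r1, r2]
  have key := aux_abs ((A - C) / h) ((B - C) / h)
  rw [abs_div, abs_div, abs_div, abs_of_pos hh]
  simp only [← add_div] at key ⊢
  exact (div_le_div_iff_of_pos_right hh).mpr key
end

section
/- Let u : ℝ^d → ℝ, l ∈ ℝ^d, h > 0. Then pointwise |Δ_{h,l} u| ≤ |δ_{h,−l}((δ_{h,l} u)₊)| + |δ_{h,l}((δ_{h,−l} u)₊)|, where Δ_{h,l} u = −δ_{h,l} δ_{h,−l} u and w₊ denotes the pointwise positive part of w. -/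
lemma core_ineq (s t : ℝ) :
    |s + t| ≤ |max (-t) 0 - max s 0| + |max (-s) 0 - max t 0| := by
  have hs := max_zero_sub_max_neg_zero_eq_self s
  have ht := max_zero_sub_max_neg_zero_eq_self t
  have e : s + t = (max s 0 - max (-t) 0) + (max t 0 - max (-s) 0) := by linarith
  rw [e]
  refine (abs_add_le _ _).trans ?_
  rw [abs_sub_comm (max s 0), abs_sub_comm (max t 0)]

theorem abs_second_diff_le_pos_parts {d : ℕ}
    (u : (Fin d → ℝ) → ℝ) (l : Fin d → ℝ) (h : ℝ) (hh : 0 < h)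
    (x : Fin d → ℝ) :
    |fdDelta2 h l u x|
      ≤ |fdDelta h (-l) (fun y => max (fdDelta h l u y) 0) x|
        + |fdDelta h l (fun y => max (fdDelta h (-l) u y) 0) x| := by
  have e1 : x + h • l + h • (-l) = x := by
    simp [smul_neg]
  have e2 : x + h • (-l) + h • l = x := by
    simp [smul_neg, add_assoc]
  simp only [fdDelta2, fdDelta, e1, e2]
  set A := u (x + h • l) with hA
  set C := u (x + h • (-l)) with hC
  set B := u x with hB
  set s := (A - B) / h with hsdef
  set t := (C - B) / h with htdef
  have h1 : (B - A) / h = -s := by rw [hsdef]; ring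
  have h2 : (B - C) / h = -t := by rw [htdef]; ring
  rw [h1, h2]
  have key := core_ineq s t
  have habs : |h| = h := abs_of_pos hh
  have lhs_eq : |-((-s - t) / h)| = |s + t| / h := by
    rw [abs_neg, abs_div, habs]
    congr 1
    rw [show -s - t = -(s + t) by ring, abs_neg]
  rw [lhs_eq, abs_div, abs_div, habs]
  calc |s + t| / h ≤ (|max (-t) 0 - max s 0| + |max (-s) 0 - max t 0|) / h :=
        (div_le_div_iff_of_pos_right hh).mpr key
    _ = _ := add_div _ _ _
end
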